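/- arXiv:1309.6903 — 2 statements merged into one kernel-verified Lean document; each statement's English description precedes it below -/
import Mathlib

section
/- Let (Ω, F, μ) be a σ-finite measure space, let ε, δ ∈ L⁰(μ) with ε > 0 and δ > 0 a.e., let f, g ∈ L⁰(μ), and let A ∈ F. Define B_ε(f) = { h ∈ L⁰ : |f − h| < ε a.e. }. Then 1_A·B_ε(f) + 1_{Aᶜ}·B_δ(g) = B_{1_A ε + 1_{Aᶜ} δ}(1_A f + 1_{Aᶜ} g), where 1_A·S + 1_{Aᶜ}·T denotes { 1_A s + 1_{Aᶜ} t : s ∈ S, t ∈ T }. -/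
open MeasureTheory

/-- The `L⁰`-ball of radius `ε` around `f` (centers and radii given as functions). -/
def L0ball {Ω : Type*} [MeasurableSpace Ω] (μ : Measure Ω) (f ε : Ω → ℝ) :
    Set (Ω →ₘ[μ] ℝ) :=
  {h | ∀ᵐ ω ∂μ, |f ω - h ω| < ε ω}

/-- Stability of `L⁰`-balls under pasting along a measurable set:
`1_A·B_ε(f) + 1_{Aᶜ}·B_δ(g) = B_{1_A ε + 1_{Aᶜ} δ}(1_A f + 1_{Aᶜ} g)`. -/
theorem L0ball_piecewise {Ω : Type*} [MeasurableSpace Ω] {μ : Measure Ω} [SigmaFinite μ]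
    (f g ε δ : Ω →ₘ[μ] ℝ) (hε : ∀ᵐ ω ∂μ, 0 < ε ω) (hδ : ∀ᵐ ω ∂μ, 0 < δ ω)
    (A : Set Ω) (hA : MeasurableSet A) :
    {u : Ω →ₘ[μ] ℝ | ∃ s ∈ L0ball μ f ε, ∃ t ∈ L0ball μ g δ,
        (u : Ω → ℝ) =ᵐ[μ] A.indicator s + Aᶜ.indicator t}
      = L0ball μ (A.indicator f + Aᶜ.indicator g) (A.indicator ε + Aᶜ.indicator δ) := by
  ext u
  simp only [Set.mem_setOf_eq, L0ball]
  constructor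
  · rintro ⟨s, hs, t, ht, hu⟩
    filter_upwards [hs, ht, hu] with ω h1 h2 h3
    by_cases hω : ω ∈ A <;>
      simp [Set.indicator_of_mem, Set.indicator_of_notMem, hω, h3, h1, h2]
  · intro hu
    have hms : AEStronglyMeasurable (A.indicator (u : Ω → ℝ) + Aᶜ.indicator (f : Ω → ℝ)) μ :=
      (u.aestronglyMeasurable.indicator hA).add (f.aestronglyMeasurable.indicator hA.compl)
    have hmt : AEStronglyMeasurable (Aᶜ.indicator (u : Ω → ℝ) + A.indicator (g : Ω → ℝ)) μ :=
      (u.aestronglyMeasurable.indicator hA.compl).add (g.aestronglyMeasurable.indicator hA)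
    refine ⟨AEEqFun.mk _ hms, ?_, AEEqFun.mk _ hmt, ?_, ?_⟩
    · filter_upwards [hu, hε, AEEqFun.coeFn_mk _ hms] with ω h1 h2 h3
      rw [h3]
      by_cases hω : ω ∈ A
      · simpa [Set.indicator_of_mem, Set.indicator_of_notMem, hω] using
          (by simpa [Set.indicator_of_mem, Set.indicator_of_notMem, hω] using h1 : |f ω - u ω| < ε ω)
      · simpa [Set.indicator_of_mem, Set.indicator_of_notMem, hω] using h2
    · filter_upwards [hu, hδ, AEEqFun.coeFn_mk _ hmt] with ω h1 h2 h3
      rw [h3]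
      by_cases hω : ω ∈ A
      · simpa [Set.indicator_of_mem, Set.indicator_of_notMem, hω] using h2
      · simpa [Set.indicator_of_mem, Set.indicator_of_notMem, hω] using
          (by simpa [Set.indicator_of_mem, Set.indicator_of_notMem, hω] using h1 : |g ω - u ω| < δ ω)
    · filter_upwards [AEEqFun.coeFn_mk _ hms, AEEqFun.coeFn_mk _ hmt] with ω h3 h4
      by_cases hω : ω ∈ A <;>
        simp [Set.indicator_of_mem, Set.indicator_of_notMem, hω, h3, h4]
end

section
/- Let (Ω, F, μ) be a σ-finite measure space and let S ⊆ L⁰(μ) be nonempty and bounded above, i.e., there is g ∈ L⁰(μ) with f ≤ g a.e. for all f ∈ S. Then S has a least upper bound in L⁰(μ) with respect to the a.e. pointwise order (an essential supremum): there exists s ∈ L⁰(μ) such that f ≤ s a.e. for all f ∈ S, and whenever f ≤ t a.e. for all f ∈ S, then s ≤ t a.e. -/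
open MeasureTheory Filter Real Set Topology

/-- Dedekind completeness of `L⁰(μ)`: every nonempty subset that is bounded above in the
a.e. pointwise order has a least upper bound (essential supremum). -/
theorem L0_essSup_exists {Ω : Type*} [MeasurableSpace Ω] {μ : Measure Ω} [SigmaFinite μ]
    (S : Set (Ω →ₘ[μ] ℝ)) (hne : S.Nonempty)
    (hbdd : ∃ g : Ω →ₘ[μ] ℝ, ∀ f ∈ S, ∀ᵐ ω ∂μ, f ω ≤ g ω) :
    ∃ s : Ω →ₘ[μ] ℝ, (∀ f ∈ S, ∀ᵐ ω ∂μ, f ω ≤ s ω) ∧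
      ∀ t : Ω →ₘ[μ] ℝ, (∀ f ∈ S, ∀ᵐ ω ∂μ, f ω ≤ t ω) → ∀ᵐ ω ∂μ, s ω ≤ t ω := by
  classical
  obtain ⟨g, hgS⟩ := hbdd
  have hgS' : ∀ f ∈ S, f ≤ g := fun f hf => AEEqFun.coeFn_le.1 (hgS f hf)
  set ν := μ.toFinite with hνdef
  have hac : ν ≪ μ := toFinite_absolutelyContinuous μ
  have hae : ae ν = ae μ := ae_toFinite
  have haeiff : ∀ p : Ω → Prop, (∀ᵐ ω ∂ν, p ω) ↔ (∀ᵐ ω ∂μ, p ω) := fun p => by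
    rw [hae]
  -- integrability of arctan compositions
  have harct : ∀ x : ℝ, ‖arctan x‖ ≤ π / 2 := fun x => by
    rw [Real.norm_eq_abs, abs_le]
    exact ⟨(neg_pi_div_two_lt_arctan x).le, (arctan_lt_pi_div_two x).le⟩
  have hint : ∀ φ : Ω → ℝ, AEStronglyMeasurable φ ν →
      Integrable (fun ω => arctan (φ ω)) ν := fun φ hφ =>
    (integrable_const (π / 2)).mono' (continuous_arctan.comp_aestronglyMeasurable hφ)
      (Eventually.of_forall fun ω => harct _)
  have hasm : ∀ f : Ω →ₘ[μ] ℝ, AEStronglyMeasurable f ν := fun f =>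
    f.aestronglyMeasurable.mono_ac hac
  set J : (Ω →ₘ[μ] ℝ) → ℝ := fun f => ∫ ω, arctan (f ω) ∂ν with hJ
  have hJmono : ∀ f h : Ω →ₘ[μ] ℝ, f ≤ h → J f ≤ J h := by
    intro f h hfh
    refine integral_mono_ae (hint _ (hasm f)) (hint _ (hasm h)) ?_
    have h1 : ∀ᵐ ω ∂ν, f ω ≤ h ω := (haeiff _).2 (AEEqFun.coeFn_le.2 hfh)
    filter_upwards [h1] with ω hω using arctan_strictMono.monotone hω
  -- the set of finite suprema of elements of S
  set T : Set (Ω →ₘ[μ] ℝ) :=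
    {h | ∃ u : Finset (Ω →ₘ[μ] ℝ), ∃ hu : u.Nonempty, ↑u ⊆ S ∧ h = u.sup' hu id} with hT
  have hST : S ⊆ T := fun f hf =>
    ⟨{f}, Finset.singleton_nonempty f, by simpa using hf, by simp⟩
  have hTle : ∀ t : Ω →ₘ[μ] ℝ, (∀ f ∈ S, f ≤ t) → ∀ h ∈ T, h ≤ t := by
    rintro t ht h ⟨u, hu, huS, rfl⟩
    exact Finset.sup'_le hu id fun b hb => ht b (huS hb)
  have hTsup : ∀ h₁ ∈ T, ∀ h₂ ∈ T, h₁ ⊔ h₂ ∈ T := by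
    rintro h₁ ⟨u₁, hu₁, hu₁S, rfl⟩ h₂ ⟨u₂, hu₂, hu₂S, rfl⟩
    exact ⟨u₁ ∪ u₂, hu₁.mono Finset.subset_union_left,
      by rw [Finset.coe_union]; exact Set.union_subset hu₁S hu₂S,
      (Finset.sup'_union hu₁ hu₂ id).symm⟩
  have hTne : T.Nonempty := hne.mono hST
  have hbddJ : BddAbove (J '' T) := by
    refine ⟨J g, ?_⟩
    rintro x ⟨h, hh, rfl⟩
    exact hJmono _ _ (hTle g hgS' h hh)
  set M : ℝ := sSup (J '' T) with hM
  obtain ⟨u, hu_mono, hu_tendsto, hu_mem⟩ := exists_seq_tendsto_sSup (hTne.image J) hbddJ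
  choose F hFT hFJ using hu_mem
  -- the increasing sequence of partial suprema
  set H : ℕ → (Ω →ₘ[μ] ℝ) := fun n => (Finset.range (n + 1)).sup' Finset.nonempty_range_add_one F
    with hHdef
  have hHT : ∀ n, H n ∈ T := by
    intro n
    refine Finset.sup'_induction _ _ (fun a ha b hb => hTsup a ha b hb) fun b _ => hFT b
  have hHmono : Monotone H := fun m n hmn =>
    Finset.sup'_le _ _ fun b hb => Finset.le_sup'_of_le F
      (Finset.mem_range.2 ((Finset.mem_range.1 hb).trans_le (by omega))) le_rfl
  have hFleH : ∀ n, F n ≤ H n := fun n =>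
    Finset.le_sup'_of_le F (Finset.self_mem_range_succ n) le_rfl
  have hJH_le : ∀ n, J (H n) ≤ M := fun n => le_csSup hbddJ ⟨H n, hHT n, rfl⟩
  have hJH_tendsto : Tendsto (fun n => J (H n)) atTop (𝓝 M) := by
    refine tendsto_of_tendsto_of_tendsto_of_le_of_le hu_tendsto tendsto_const_nhds
      (fun n => ?_) hJH_le
    rw [← hFJ n]; exact hJmono _ _ (hFleH n)
  -- measurable representatives
  have hHam : ∀ n, AEMeasurable (H n) μ := fun n => (H n).aestronglyMeasurable.aemeasurable
  set G : ℕ → Ω → ℝ := fun n => (hHam n).mk _ with hGdef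
  have hGmeas : ∀ n, Measurable (G n) := fun n => (hHam n).measurable_mk
  have hGH : ∀ n, ⇑(H n) =ᵐ[μ] G n := fun n => (hHam n).ae_eq_mk
  have hgood : ∀ᵐ ω ∂μ, (∀ n, G n ω = H n ω) ∧ (∀ m n : ℕ, m ≤ n → H m ω ≤ H n ω) ∧
      (∀ n, H n ω ≤ g ω) := by
    have h1 : ∀ᵐ ω ∂μ, ∀ n, G n ω = H n ω := ae_all_iff.2 fun n => (hGH n).symm
    have h2 : ∀ᵐ ω ∂μ, ∀ m n : ℕ, m ≤ n → H m ω ≤ H n ω := by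
      rw [ae_all_iff]; intro m
      rw [ae_all_iff]; intro n
      rcases le_or_gt m n with h | h
      · filter_upwards [AEEqFun.coeFn_le.2 (hHmono h)] with ω hω _ using hω
      · exact Eventually.of_forall fun ω hmn => absurd hmn (not_le.2 h)
    have h3 : ∀ᵐ ω ∂μ, ∀ n, H n ω ≤ g ω :=
      ae_all_iff.2 fun n => AEEqFun.coeFn_le.2 (hTle g hgS' _ (hHT n))
    filter_upwards [h1, h2, h3] with ω a b c using ⟨a, b, c⟩
  -- the candidate essential supremum
  set s₀ : Ω → ℝ := fun ω => ⨆ n, G n ω with hs₀def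
  have hs₀meas : Measurable s₀ := Measurable.iSup hGmeas
  have key : ∀ᵐ ω ∂μ, Monotone (fun n => G n ω) ∧
      Tendsto (fun n => G n ω) atTop (𝓝 (s₀ ω)) := by
    filter_upwards [hgood] with ω hω
    obtain ⟨h1, h2, h3⟩ := hω
    have hmono : Monotone fun n => G n ω := fun m n hmn => by
      show G m ω ≤ G n ω
      rw [h1 m, h1 n]; exact h2 m n hmn
    have hbdd : BddAbove (Set.range fun n => G n ω) := by
      refine ⟨g ω, ?_⟩
      rintro x ⟨n, rfl⟩
      show G n ω ≤ g ω
      rw [h1 n]; exact h3 n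
    exact ⟨hmono, tendsto_atTop_ciSup hmono hbdd⟩
  refine ⟨AEEqFun.mk s₀ hs₀meas.aestronglyMeasurable, ?_, ?_⟩
  all_goals
    have hs_coe : ⇑(AEEqFun.mk s₀ hs₀meas.aestronglyMeasurable) =ᵐ[μ] s₀ :=
      AEEqFun.coeFn_mk _ _
  · -- upper bound
    intro f hf
    have hfasm : AEStronglyMeasurable f ν := hasm f
    have hGint : ∀ n, Integrable (fun ω => arctan (G n ω)) ν := fun n =>
      hint _ ((hGmeas n).aestronglyMeasurable.mono_ac hac)
    have hs₀int : Integrable (fun ω => arctan (s₀ ω)) ν :=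
      hint _ (hs₀meas.aestronglyMeasurable.mono_ac hac)
    have hJG : ∀ n, ∫ ω, arctan (G n ω) ∂ν = J (H n) := fun n => by
      refine integral_congr_ae ?_
      filter_upwards [(haeiff _).2 (hGH n)] with ω h using by rw [h]
    have hMCT : Tendsto (fun n => ∫ ω, arctan (G n ω) ∂ν) atTop
        (𝓝 (∫ ω, arctan (s₀ ω) ∂ν)) := by
      refine integral_tendsto_of_tendsto_of_monotone hGint hs₀int ?_ ?_
      · filter_upwards [(haeiff _).2 key] with ω hω a b hab using
          arctan_strictMono.monotone (hω.1 hab)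
      · filter_upwards [(haeiff _).2 key] with ω hω using
          (continuous_arctan.tendsto _).comp hω.2
    have hMs : ∫ ω, arctan (s₀ ω) ∂ν = M := by
      refine tendsto_nhds_unique ?_ hJH_tendsto
      simpa only [hJG] using hMCT
    -- compare with max (f ω) (s₀ ω)
    have hKint : ∀ n, Integrable (fun ω => arctan (max (f ω) (G n ω))) ν := fun n =>
      hint _ (hfasm.sup ((hGmeas n).aestronglyMeasurable.mono_ac hac))
    have hKlim : Integrable (fun ω => arctan (max (f ω) (s₀ ω))) ν :=
      hint _ (hfasm.sup (hs₀meas.aestronglyMeasurable.mono_ac hac))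
    have hKJ : ∀ n, ∫ ω, arctan (max (f ω) (G n ω)) ∂ν = J (f ⊔ H n) := fun n => by
      refine integral_congr_ae ?_
      filter_upwards [(haeiff _).2 (hGH n), (haeiff _).2 (AEEqFun.coeFn_sup f (H n))]
        with ω h1 h2
      rw [h2, ← h1]
    have hKle : ∀ n, ∫ ω, arctan (max (f ω) (G n ω)) ∂ν ≤ M := fun n => by
      rw [hKJ n]
      exact le_csSup hbddJ ⟨f ⊔ H n, hTsup _ (hST hf) _ (hHT n), rfl⟩
    have hKtend : Tendsto (fun n => ∫ ω, arctan (max (f ω) (G n ω)) ∂ν) atTop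
        (𝓝 (∫ ω, arctan (max (f ω) (s₀ ω)) ∂ν)) := by
      refine integral_tendsto_of_tendsto_of_monotone hKint hKlim ?_ ?_
      · filter_upwards [(haeiff _).2 key] with ω hω a b hab using
          arctan_strictMono.monotone (max_le_max le_rfl (hω.1 hab))
      · filter_upwards [(haeiff _).2 key] with ω hω using
          (continuous_arctan.tendsto _).comp (tendsto_const_nhds.max hω.2)
    have hge : (fun ω => arctan (s₀ ω)) ≤ᵐ[ν] fun ω => arctan (max (f ω) (s₀ ω)) :=
      Eventually.of_forall fun ω => arctan_strictMono.monotone (le_max_right _ _)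
    have hle : ∫ ω, arctan (max (f ω) (s₀ ω)) ∂ν ≤ ∫ ω, arctan (s₀ ω) ∂ν := by
      rw [hMs]; exact le_of_tendsto' hKtend hKle
    have heq : (fun ω => arctan (s₀ ω)) =ᵐ[ν] fun ω => arctan (max (f ω) (s₀ ω)) :=
      (integral_eq_iff_of_ae_le hs₀int hKlim hge).1
        (le_antisymm (integral_mono_ae hs₀int hKlim hge) hle)
    have heqμ : ∀ᵐ ω ∂μ, arctan (s₀ ω) = arctan (max (f ω) (s₀ ω)) := (haeiff _).1 heq
    filter_upwards [heqμ, hs_coe] with ω h1 h2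
    rw [h2]
    exact max_eq_right_iff.1 (arctan_injective h1).symm
  · -- least upper bound
    intro t ht
    have ht' : ∀ f ∈ S, f ≤ t := fun f hf => AEEqFun.coeFn_le.1 (ht f hf)
    have hHt : ∀ᵐ ω ∂μ, ∀ n, H n ω ≤ t ω :=
      ae_all_iff.2 fun n => AEEqFun.coeFn_le.2 (hTle t ht' _ (hHT n))
    filter_upwards [hHt, hgood, hs_coe] with ω h1 h2 h3
    rw [h3]
    exact ciSup_le fun n => by rw [h2.1 n]; exact h1 n
end
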